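/- The average of ReLU(⟨w̄, x⟩) over w̄ uniformly distributed on the unit sphere S^{d-1} equals (C_Γ/√d)·‖x‖, or equivalently the surface integral ∫_{S^{d-1}} ReLU(⟨w̄, x⟩) dσ^{d-1}(w̄) = (π^{(d-1)/2}/Γ((d+1)/2))·‖x‖. -/

import Mathlib

open MeasureTheory Real Set Metric

noncomputable def Cgamma (d : ℕ) : ℝ :=
  Real.Gamma ((d : ℝ) / 2) * Real.sqrt d / (2 * Real.sqrt π * Real.Gamma (((d : ℝ) + 1) / 2))

lemma aux_integral_volumeIoiPow (n : ℕ) (G : ℝ → ℝ) :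
    ∫ r : Ioi (0:ℝ), G r ∂(Measure.volumeIoiPow n)
      = ∫ r in Ioi (0:ℝ), r ^ n * G r := by
  simp only [Measure.volumeIoiPow, ENNReal.ofReal]
  rw [integral_withDensity_eq_integral_smul
        ((measurable_subtype_coe.pow_const _).real_toNNReal) (fun r : Ioi (0:ℝ) => G r),
      integral_subtype_comap measurableSet_Ioi (fun a : ℝ => Real.toNNReal (a ^ n) • G a)]
  refine setIntegral_congr_fun measurableSet_Ioi fun y hy => ?_
  rw [NNReal.smul_def, Real.coe_toNNReal _ (pow_nonneg hy.out.le _), smul_eq_mul]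

lemma aux_polar {d : ℕ} (hd : 1 ≤ d) (F : sphere (0 : EuclideanSpace ℝ (Fin d)) 1 → ℝ)
    (G : ℝ → ℝ) (g : EuclideanSpace ℝ (Fin d) → ℝ)
    (hg : ∀ (w : sphere (0 : EuclideanSpace ℝ (Fin d)) 1) (r : ℝ), 0 < r →
      g (r • (w : EuclideanSpace ℝ (Fin d))) = F w * G r) :
    ∫ y, g y
      = (∫ w, F w ∂((volume : Measure (EuclideanSpace ℝ (Fin d))).toSphere))
        * ∫ r in Ioi (0:ℝ), r ^ (d - 1) * G r := by
  haveI : Nontrivial (EuclideanSpace ℝ (Fin d)) :=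
    Module.nontrivial_of_finrank_pos (R := ℝ) (by simp [finrank_euclideanSpace_fin]; omega)
  have h1 : ∫ y, g y
      = ∫ y : ({(0:EuclideanSpace ℝ (Fin d))}ᶜ : Set _), g y
          ∂((volume : Measure (EuclideanSpace ℝ (Fin d))).comap Subtype.val) := by
    rw [integral_subtype_comap (measurableSet_singleton _).compl g,
      MeasureTheory.restrict_compl_singleton]
  have h2 := (volume : Measure (EuclideanSpace ℝ
      (Fin d))).measurePreserving_homeomorphUnitSphereProd.integral_comp
      (Homeomorph.measurableEmbedding _)
      (fun p : sphere (0 : EuclideanSpace ℝ (Fin d)) 1 × Ioi (0:ℝ) => F p.1 * G p.2)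
  simp only [finrank_euclideanSpace_fin] at h2
  have h3 : (fun y : ({(0:EuclideanSpace ℝ (Fin d))}ᶜ : Set _) => g y)
      = fun y => (fun p : sphere (0 : EuclideanSpace ℝ (Fin d)) 1 × Ioi (0:ℝ) => F p.1 * G p.2)
          (homeomorphUnitSphereProd _ y) := by
    funext y
    have hy : (y : EuclideanSpace ℝ (Fin d)) ≠ 0 := y.2
    have h := hg (homeomorphUnitSphereProd _ y).1 ‖(y : EuclideanSpace ℝ (Fin d))‖
      (norm_pos_iff.2 hy)
    simp only [homeomorphUnitSphereProd_apply_fst_coe,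
      smul_inv_smul₀ (norm_ne_zero_iff.2 hy)] at h
    simpa [homeomorphUnitSphereProd_apply_snd_coe] using h
  rw [h1, h3, h2, integral_prod_mul F (fun r : Ioi (0:ℝ) => G r),
    aux_integral_volumeIoiPow]

lemma aux_gauss1 : ∫ t : ℝ, Real.exp (-t^2) = Real.sqrt π := by
  simpa using integral_gaussian 1

lemma aux_exp_transfer (d : ℕ) :
    ∫ y : EuclideanSpace ℝ (Fin d), Real.exp (-‖y‖^2) = Real.sqrt π ^ d := by
  have h1 : ∀ y : EuclideanSpace ℝ (Fin d),
      Real.exp (-‖y‖^2) = ∏ i, Real.exp (-(y i)^2) := by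
    intro y
    rw [EuclideanSpace.norm_eq, Real.sq_sqrt (by positivity), ← Real.exp_sum]
    congr 1
    simp [Real.norm_eq_abs, sq_abs]
  calc ∫ y : EuclideanSpace ℝ (Fin d), Real.exp (-‖y‖^2)
      = ∫ y : EuclideanSpace ℝ (Fin d), ∏ i, Real.exp (-(y i)^2) := by
        simp_rw [h1]
    _ = ∫ z : Fin d → ℝ, ∏ i, Real.exp (-(z i)^2) :=
        (EuclideanSpace.volume_preserving_symm_measurableEquiv_toLp (Fin d)).integral_comp'
          (fun z : Fin d → ℝ => ∏ i, Real.exp (-(z i)^2))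
    _ = (∫ t : ℝ, Real.exp (-t^2)) ^ (Fintype.card (Fin d)) :=
        integral_fintype_prod_eq_pow (fun t : ℝ => Real.exp (-t^2))
    _ = Real.sqrt π ^ d := by rw [aux_gauss1, Fintype.card_fin]

lemma aux_mass {d : ℕ} (hd : 1 ≤ d) :
    (((volume : Measure (EuclideanSpace ℝ (Fin d))).toSphere) Set.univ).toReal
      * ((1/2) * Real.Gamma ((d:ℝ)/2)) = Real.sqrt π ^ d := by
  have hg : ∀ (w : sphere (0 : EuclideanSpace ℝ (Fin d)) 1) (r : ℝ), 0 < r →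
      Real.exp (-‖r • (w : EuclideanSpace ℝ (Fin d))‖^2) = (fun _ => (1:ℝ)) w
        * Real.exp (-r^2) := by
    intro w r hr
    rw [norm_smul, mem_sphere_zero_iff_norm.mp w.2, Real.norm_eq_abs, abs_of_pos hr]
    simp
  have hp := aux_polar hd (fun _ => (1:ℝ)) (fun r => Real.exp (-r^2))
    (fun y => Real.exp (-‖y‖^2)) hg
  rw [aux_exp_transfer d, integral_const, smul_eq_mul, mul_one] at hp
  have hrad : ∫ r in Ioi (0:ℝ), r ^ (d-1) * Real.exp (-r^2)
      = (1/2) * Real.Gamma ((d:ℝ)/2) := by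
    rw [setIntegral_congr_fun measurableSet_Ioi
        (g := fun r : ℝ => r ^ (((d-1:ℕ)):ℝ) * Real.exp (-r ^ (2:ℝ)))
        (fun r hr => by
          show r ^ (d-1) * Real.exp (-r^2) = r ^ (((d-1:ℕ)):ℝ) * Real.exp (-r ^ (2:ℝ))
          rw [Real.rpow_natCast, show (2:ℝ) = ((2:ℕ):ℝ) by norm_num, Real.rpow_natCast]),
      integral_rpow_mul_exp_neg_rpow (by norm_num)
        (lt_of_lt_of_le neg_one_lt_zero (Nat.cast_nonneg _))]
    congr 2
    rw [Nat.cast_sub hd]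
    push_cast
    ring
  rw [hrad] at hp
  simp only [measureReal_def] at hp
  linarith [hp]

lemma aux_J : ∫ t : ℝ, max t 0 * Real.exp (-t^2) = 1/2 := by
  have h2 : Integrable (fun t : ℝ => |t| * Real.exp (-t^2)) := by
    have h := (integrable_mul_exp_neg_mul_sq (b := 1) one_pos).abs
    simpa [abs_mul, abs_of_pos (Real.exp_pos _)] using h
  have hi : Integrable (fun t : ℝ => max t 0 * Real.exp (-t^2)) := by
    refine h2.mono' (Continuous.aestronglyMeasurable (by continuity)) ?_
    filter_upwards with t
    rw [Real.norm_eq_abs, abs_mul, abs_of_pos (Real.exp_pos _)]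
    have hle : |max t 0| ≤ |t| := by
      rcases le_total t 0 with h | h
      · simp [max_eq_right h, abs_nonneg]
      · rw [max_eq_left h, abs_of_nonneg h]
    exact mul_le_mul_of_nonneg_right hle (Real.exp_pos _).le
  have h0 : ∫ t in Iic (0:ℝ), max t 0 * Real.exp (-t^2) = 0 := by
    rw [setIntegral_congr_fun measurableSet_Iic (g := fun _ : ℝ => (0:ℝ))
      (fun t ht => by simp [max_eq_right ht.out]), integral_zero]
  have h1 : ∫ t in Ioi (0:ℝ), max t 0 * Real.exp (-t^2) = 1/2 := by
    rw [setIntegral_congr_fun measurableSet_Ioi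
        (g := fun t : ℝ => t ^ ((1:ℕ):ℝ) * Real.exp (-t ^ (2:ℝ)))
        (fun t ht => by
          show max t 0 * Real.exp (-t^2) = t ^ (((1:ℕ)):ℝ) * Real.exp (-t ^ (2:ℝ))
          rw [Real.rpow_natCast, pow_one, max_eq_left ht.out.le,
            show (2:ℝ) = ((2:ℕ):ℝ) by norm_num, Real.rpow_natCast]),
      integral_rpow_mul_exp_neg_rpow (by norm_num) (by norm_num)]
    norm_num [Real.Gamma_one]
  rw [← intervalIntegral.integral_Iic_add_Ioi (b := (0:ℝ)) hi.integrableOn hi.integrableOn, h0, h1, zero_add]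

lemma aux_I {d : ℕ} (hd : 1 ≤ d) (x : EuclideanSpace ℝ (Fin d)) :
    ∫ y : EuclideanSpace ℝ (Fin d),
        max (inner ℝ y x : ℝ) 0 * Real.exp (-‖y‖^2)
      = ‖x‖ * ((1/2) * Real.sqrt π ^ (d-1)) := by
  rcases eq_or_ne x 0 with rfl | hx
  · simp
  have hnx : ‖x‖ ≠ 0 := norm_ne_zero_iff.2 hx
  set i0 : Fin d := ⟨0, hd⟩ with hi0
  set v : EuclideanSpace ℝ (Fin d) := ‖x‖⁻¹ • x with hv
  have hv1 : ‖v‖ = 1 := by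
    rw [hv, norm_smul, norm_inv, norm_norm, inv_mul_cancel₀ hnx]
  set e : EuclideanSpace ℝ (Fin d) := EuclideanSpace.single i0 (1:ℝ) with he
  have he1 : ‖e‖ = 1 := by simp [he]
  set R : EuclideanSpace ℝ (Fin d) ≃ₗᵢ[ℝ] EuclideanSpace ℝ (Fin d) :=
    Submodule.reflection (ℝ ∙ (e - v))ᗮ with hR
  have hRe : R e = v := Submodule.reflection_sub (he1.trans hv1.symm)
  have hinner : ∀ y : EuclideanSpace ℝ (Fin d), (inner ℝ (R y) x : ℝ) = ‖x‖ * y i0 := by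
    intro y
    have h1 : (inner ℝ (R y) x : ℝ) = ‖x‖ * (inner ℝ (R y) v : ℝ) := by
      conv_lhs => rw [show x = ‖x‖ • v from (smul_inv_smul₀ hnx x).symm]
      exact real_inner_smul_right _ _ _
    rw [h1, ← hRe, LinearIsometryEquiv.inner_map_map]
    congr 1
    simp [he, EuclideanSpace.inner_single_right]
  set f : Fin d → ℝ → ℝ :=
    fun i t => (if i = i0 then max (‖x‖ * t) 0 else 1) * Real.exp (-t^2) with hf
  have hexp : ∀ y : EuclideanSpace ℝ (Fin d),
      Real.exp (-‖y‖^2) = ∏ i, Real.exp (-(y i)^2) := by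
    intro y
    rw [EuclideanSpace.norm_eq, Real.sq_sqrt (by positivity), ← Real.exp_sum]
    congr 1
    simp [Real.norm_eq_abs, sq_abs]
  have hprod : ∀ y : EuclideanSpace ℝ (Fin d),
      max (‖x‖ * y i0) 0 * Real.exp (-‖y‖^2) = ∏ i, f i (y i) := by
    intro y
    rw [hexp y, hf]
    simp only []
    rw [Finset.prod_mul_distrib,
      Finset.prod_ite_eq' Finset.univ i0 (fun i => max (‖x‖ * y i) 0),
      if_pos (Finset.mem_univ i0)]
  have hcomp := (LinearIsometryEquiv.measurePreserving R).integral_comp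
    R.toHomeomorph.measurableEmbedding
    (fun y : EuclideanSpace ℝ (Fin d) => max (inner ℝ y x : ℝ) 0 * Real.exp (-‖y‖^2))
  have hfi0 : ∫ t : ℝ, f i0 t = ‖x‖ * (1/2) := by
    have hmax : ∀ t : ℝ, max (‖x‖ * t) 0 = ‖x‖ * max t 0 := by
      intro t
      have h := mul_max_of_nonneg t 0 (norm_nonneg x)
      rw [mul_zero] at h
      exact h.symm
    simp only [hf, if_pos rfl]
    calc ∫ t : ℝ, max (‖x‖ * t) 0 * Real.exp (-t^2)
        = ∫ t : ℝ, ‖x‖ * (max t 0 * Real.exp (-t^2)) := by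
          congr 1; funext t; rw [hmax t, mul_assoc]
      _ = ‖x‖ * ∫ t : ℝ, max t 0 * Real.exp (-t^2) := integral_const_mul _ _
      _ = ‖x‖ * (1/2) := by rw [aux_J]
  calc ∫ y : EuclideanSpace ℝ (Fin d), max (inner ℝ y x : ℝ) 0 * Real.exp (-‖y‖^2)
      = ∫ y : EuclideanSpace ℝ (Fin d),
          max (inner ℝ (R y) x : ℝ) 0 * Real.exp (-‖R y‖^2) := hcomp.symm
    _ = ∫ y : EuclideanSpace ℝ (Fin d), ∏ i, f i (y i) := by
        congr 1; funext y
        rw [hinner y, LinearIsometryEquiv.norm_map, hprod y]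
    _ = ∫ z : Fin d → ℝ, ∏ i, f i (z i) :=
        (EuclideanSpace.volume_preserving_symm_measurableEquiv_toLp (Fin d)).integral_comp'
          (fun z : Fin d → ℝ => ∏ i, f i (z i))
    _ = ∏ i, ∫ t : ℝ, f i t := integral_fintype_prod_eq_prod f
    _ = ‖x‖ * ((1/2) * Real.sqrt π ^ (d-1)) := by
        have hrest : ∀ i ∈ Finset.univ.erase i0, (∫ t : ℝ, f i t) = Real.sqrt π := by
          intro i hi
          simp only [hf, if_neg (Finset.mem_erase.mp hi).1, one_mul]
          exact aux_gauss1
        rw [← Finset.mul_prod_erase Finset.univ _ (Finset.mem_univ i0), hfi0,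
          Finset.prod_congr rfl hrest, Finset.prod_const,
          Finset.card_erase_of_mem (Finset.mem_univ _), Finset.card_univ, Fintype.card_fin]
        ring

theorem stmt2 (d : ℕ) (hd : 1 ≤ d) (x : EuclideanSpace ℝ (Fin d)) :
    (∫ w : Metric.sphere (0 : EuclideanSpace ℝ (Fin d)) 1,
        max (inner ℝ (w : EuclideanSpace ℝ (Fin d)) x : ℝ) 0
        ∂((volume : Measure (EuclideanSpace ℝ (Fin d))).toSphere))
      = π ^ (((d : ℝ) - 1) / 2) / Real.Gamma (((d : ℝ) + 1) / 2) * ‖x‖ ∧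
    (∫ w : Metric.sphere (0 : EuclideanSpace ℝ (Fin d)) 1,
        max (inner ℝ (w : EuclideanSpace ℝ (Fin d)) x : ℝ) 0
        ∂((volume : Measure (EuclideanSpace ℝ (Fin d))).toSphere))
      / (((volume : Measure (EuclideanSpace ℝ (Fin d))).toSphere) Set.univ).toReal
      = Cgamma d / Real.sqrt d * ‖x‖ := by
  have hg : ∀ (w : sphere (0 : EuclideanSpace ℝ (Fin d)) 1) (r : ℝ), 0 < r →
      max (inner ℝ (r • (w : EuclideanSpace ℝ (Fin d))) x : ℝ) 0
          * Real.exp (-‖r • (w : EuclideanSpace ℝ (Fin d))‖^2)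
        = max (inner ℝ (w : EuclideanSpace ℝ (Fin d)) x : ℝ) 0 * (r * Real.exp (-r^2)) := by
    intro w r hr
    rw [norm_smul, mem_sphere_zero_iff_norm.mp w.2, Real.norm_eq_abs, abs_of_pos hr,
      mul_one, real_inner_smul_left, ← mul_zero r, ← mul_max_of_nonneg _ _ hr.le]
    ring_nf
  have hp := aux_polar hd (fun w => max (inner ℝ (w : EuclideanSpace ℝ (Fin d)) x : ℝ) 0)
    (fun r => r * Real.exp (-r^2))
    (fun y => max (inner ℝ y x : ℝ) 0 * Real.exp (-‖y‖^2)) hg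
  rw [aux_I hd x] at hp
  have hrad : ∫ r in Ioi (0:ℝ), r ^ (d-1) * (r * Real.exp (-r^2))
      = (1/2) * Real.Gamma (((d:ℝ)+1)/2) := by
    rw [setIntegral_congr_fun measurableSet_Ioi
        (g := fun r : ℝ => r ^ ((d:ℕ):ℝ) * Real.exp (-r ^ (2:ℝ)))
        (fun r hr => by
          show r ^ (d-1) * (r * Real.exp (-r^2)) = r ^ (((d:ℕ)):ℝ) * Real.exp (-r ^ (2:ℝ))
          rw [Real.rpow_natCast, show (2:ℝ) = ((2:ℕ):ℝ) by norm_num, Real.rpow_natCast,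
            ← mul_assoc, ← pow_succ, Nat.sub_add_cancel hd]),
      integral_rpow_mul_exp_neg_rpow (by norm_num)
        (lt_of_lt_of_le neg_one_lt_zero (Nat.cast_nonneg _))]
  rw [hrad] at hp
  -- hp : ‖x‖ * ((1/2) * √π^(d-1)) = S * ((1/2) * Γ((d+1)/2))
  have hd1 : (1:ℝ) ≤ (d:ℝ) := by exact_mod_cast hd
  have hΓ1 : 0 < Real.Gamma (((d:ℝ)+1)/2) := Real.Gamma_pos_of_pos (by positivity)
  have hΓ2 : 0 < Real.Gamma ((d:ℝ)/2) := Real.Gamma_pos_of_pos (by positivity)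
  have hππ : Real.sqrt π ^ (d-1) = π ^ (((d:ℝ)-1)/2) := by
    rw [Real.sqrt_eq_rpow, ← Real.rpow_natCast (π ^ ((1:ℝ)/2)) (d-1),
      ← Real.rpow_mul pi_pos.le]
    congr 1
    rw [Nat.cast_sub hd]
    push_cast; ring
  have hππ' : Real.sqrt π ^ d = π ^ ((d:ℝ)/2) := by
    rw [Real.sqrt_eq_rpow, ← Real.rpow_natCast (π ^ ((1:ℝ)/2)) d,
      ← Real.rpow_mul pi_pos.le]
    congr 1; ring
  have part1 : (∫ w : Metric.sphere (0 : EuclideanSpace ℝ (Fin d)) 1,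
        max (inner ℝ (w : EuclideanSpace ℝ (Fin d)) x : ℝ) 0
        ∂((volume : Measure (EuclideanSpace ℝ (Fin d))).toSphere))
      = π ^ (((d : ℝ) - 1) / 2) / Real.Gamma (((d : ℝ) + 1) / 2) * ‖x‖ := by
    have hne : ((1/2:ℝ) * Real.Gamma (((d:ℝ)+1)/2)) ≠ 0 := by positivity
    refine mul_right_cancel₀ hne ?_
    rw [← hp, hππ]
    field_simp
  refine ⟨part1, ?_⟩
  have hmass := aux_mass hd
  rw [hππ'] at hmass
  have hT : (((volume : Measure (EuclideanSpace ℝ (Fin d))).toSphere) Set.univ).toReal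
      = 2 * π ^ ((d:ℝ)/2) / Real.Gamma ((d:ℝ)/2) := by
    rw [eq_div_iff hΓ2.ne']
    linear_combination 2 * hmass
  rw [part1, hT, Cgamma]
  have hsplit : π ^ ((d:ℝ)/2) = π ^ (((d:ℝ)-1)/2) * Real.sqrt π := by
    rw [Real.sqrt_eq_rpow, ← Real.rpow_add pi_pos]
    congr 1; ring
  have hsd : (0:ℝ) < Real.sqrt d := Real.sqrt_pos.2 (by positivity)
  have hsπ : (0:ℝ) < Real.sqrt π := Real.sqrt_pos.2 pi_pos
  have hpd : (0:ℝ) < π ^ (((d:ℝ)-1)/2) := Real.rpow_pos_of_pos pi_pos _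
  rw [hsplit]
  field_simp
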